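/- Let Γ be an edge-regular graph with parameters (v,k,λ). Then (v−k−1)(v−k−2) − k(v−2k+λ) ≥ 0. In particular, there is no edge-regular graph (and hence no Neumaier graph) with parameters (v,k,λ) satisfying (v−k−1)(v−k−2) − k(v−2k+λ) < 0. -/

import Mathlib

open Finset

/-- A finite simple graph is edge-regular with parameters `(v, k, λ)` if it has exactly
`v` vertices, every vertex has exactly `k` neighbours, it has at least one edge, and any
two adjacent vertices have exactly `λ` common neighbours. -/
def IsEdgeRegular {V : Type*} (G : SimpleGraph V) (v k l : ℕ) : Prop :=
  Nat.card V = v ∧ (∀ x : V, (G.neighborSet x).ncard = k) ∧ (∃ x y : V, G.Adj x y) ∧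
    ∀ x y : V, G.Adj x y → (G.commonNeighbors x y).ncard = l

/-- If `Γ` is an edge-regular graph with parameters `(v, k, λ)`, then
`(v-k-1)(v-k-2) - k(v-2k+λ) ≥ 0`.  In particular, there is no edge-regular graph (and
hence no Neumaier graph) with parameters `(v, k, λ)` satisfying
`(v-k-1)(v-k-2) - k(v-2k+λ) < 0`. -/
theorem edgeRegular_ineq {V : Type*} [Fintype V] (G : SimpleGraph V) (v k l : ℕ)
    (h : IsEdgeRegular G v k l) :
    0 ≤ ((v : ℤ) - k - 1) * ((v : ℤ) - k - 2) - (k : ℤ) * ((v : ℤ) - 2 * k + l) := by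
  classical
  obtain ⟨hv, hk, ⟨x, y0, hxy0⟩, hl⟩ := h
  have hdeg : ∀ z : V, (Finset.univ.filter (G.Adj z)).card = k := by
    intro z
    rw [← hk z]
    rw [Set.ncard_eq_toFinset_card']
    congr 1
    ext w
    simp [SimpleGraph.neighborSet]
    exact Set.mem_toFinset.symm
  set A := Finset.univ.filter (G.Adj x) with hA
  set B := Finset.univ \ insert x A with hB
  have hxA : x ∉ A := by simp [hA]
  have hAcard : A.card = k := hdeg x
  have hvcard : Fintype.card V = v := by rw [← hv, Nat.card_eq_fintype_card]
  have hle : k + 1 ≤ v := by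
    rw [← hvcard, ← Finset.card_univ]
    calc k + 1 = (insert x A).card := by
          rw [Finset.card_insert_of_notMem hxA, hAcard]
    _ ≤ Finset.univ.card := Finset.card_le_card (Finset.subset_univ _)
  have hBcard : (B.card : ℤ) = (v : ℤ) - k - 1 := by
    have h1 : B.card = v - (k + 1) := by
      rw [hB, Finset.card_sdiff_of_subset (Finset.subset_univ _),
        Finset.card_insert_of_notMem hxA, hAcard, Finset.card_univ, hvcard]
    rw [h1, Nat.cast_sub hle]
    push_cast
    ring
  -- membership facts
  have hBmem : ∀ z ∈ B, z ≠ x ∧ ¬ G.Adj x z := by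
    intro z hz
    rw [hB] at hz
    simp [hA] at hz
    tauto
  -- for z in B, split degree
  have split : ∀ z ∈ B, (A.filter (G.Adj z)).card + (B.filter (G.Adj z)).card = k := by
    intro z hz
    obtain ⟨hzx, hzadj⟩ := hBmem z hz
    rw [← hdeg z]
    have huniv : (insert x A) ∪ B = Finset.univ := by
      rw [hB]; exact Finset.union_sdiff_of_subset (Finset.subset_univ _)
    have hdisj : Disjoint (insert x A) B := by
      rw [hB]; exact Finset.disjoint_sdiff
    rw [← huniv, Finset.filter_union,
      Finset.card_union_of_disjoint (Finset.disjoint_filter_filter hdisj)]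
    congr 2
    rw [Finset.filter_insert]
    rw [if_neg]
    intro hzx'
    exact hzadj (hzx'.symm)
  -- for y in A, count neighbours in B
  have inA : ∀ y ∈ A, ((B.filter (G.Adj y)).card : ℤ) = (k : ℤ) - 1 - l := by
    intro y hy
    have hxy : G.Adj x y := by simpa [hA] using hy
    have hcn : (A.filter (G.Adj y)).card = l := by
      rw [← hl x y hxy, Set.ncard_eq_toFinset_card']
      congr 1
      ext w
      simp [SimpleGraph.commonNeighbors, SimpleGraph.neighborSet, hA, and_comm]
      exact Iff.symm (Set.mem_toFinset (s := G.commonNeighbors x y))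
    have huniv : (insert x A) ∪ B = Finset.univ := by
      rw [hB]; exact Finset.union_sdiff_of_subset (Finset.subset_univ _)
    have hdisj : Disjoint (insert x A) B := by
      rw [hB]; exact Finset.disjoint_sdiff
    have hk' : ((insert x A).filter (G.Adj y)).card + (B.filter (G.Adj y)).card = k := by
      rw [← hdeg y, ← huniv, Finset.filter_union,
        Finset.card_union_of_disjoint (Finset.disjoint_filter_filter hdisj)]
    have hins : ((insert x A).filter (G.Adj y)).card = l + 1 := by
      rw [Finset.filter_insert, if_pos (G.adj_symm hxy),
        Finset.card_insert_of_notMem (fun hmem => hxA (Finset.mem_filter.1 hmem).1), hcn]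
    rw [hins] at hk'
    have : (((l:ℤ) + 1) + ((B.filter (G.Adj y)).card : ℤ)) = (k : ℤ) := by
      exact_mod_cast congrArg (Nat.cast : ℕ → ℤ) hk'
    linarith
  -- double counting
  have swap : (∑ z ∈ B, ((A.filter (G.Adj z)).card : ℤ))
      = ∑ y ∈ A, ((B.filter (G.Adj y)).card : ℤ) := by
    have e1 : ∀ z, ((A.filter (G.Adj z)).card : ℤ) = ∑ y ∈ A, if G.Adj z y then (1:ℤ) else 0 := by
      intro z; rw [Finset.card_filter]; push_cast; rfl
    have e2 : ∀ y, ((B.filter (G.Adj y)).card : ℤ) = ∑ z ∈ B, if G.Adj y z then (1:ℤ) else 0 := by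
      intro y; rw [Finset.card_filter]; push_cast; rfl
    simp_rw [e1, e2]
    rw [Finset.sum_comm]
    apply Finset.sum_congr rfl
    intro y _
    apply Finset.sum_congr rfl
    intro z _
    simp [G.adj_comm]
  have sumA : (∑ y ∈ A, ((B.filter (G.Adj y)).card : ℤ)) = (k : ℤ) * ((k : ℤ) - 1 - l) := by
    rw [Finset.sum_congr rfl inA, Finset.sum_const, hAcard]
    push_cast; ring
  -- bound each term
  have hbound : ∀ z ∈ B, ((B.filter (G.Adj z)).card : ℤ) ≤ (B.card : ℤ) - 1 := by
    intro z hz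
    have hsub : B.filter (G.Adj z) ⊆ B.erase z := by
      intro w hw
      simp only [Finset.mem_filter] at hw
      exact Finset.mem_erase.2 ⟨fun hwz => G.irrefl (hwz ▸ hw.2), hw.1⟩
    have := Finset.card_le_card hsub
    rw [Finset.card_erase_of_mem hz] at this
    have hB1 : 1 ≤ B.card := Finset.card_pos.2 ⟨z, hz⟩
    have : ((B.filter (G.Adj z)).card : ℤ) ≤ ((B.card - 1 : ℕ) : ℤ) := by exact_mod_cast this
    rwa [Nat.cast_sub hB1] at this
  -- put it together
  have key : (k : ℤ) * (B.card : ℤ) - (k : ℤ) * ((k : ℤ) - 1 - l)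
      ≤ (B.card : ℤ) * ((B.card : ℤ) - 1) := by
    have hsum : ∑ z ∈ B, ((B.filter (G.Adj z)).card : ℤ)
        ≤ ∑ z ∈ B, ((B.card : ℤ) - 1) := Finset.sum_le_sum hbound
    have hsplit : ∑ z ∈ B, ((B.filter (G.Adj z)).card : ℤ)
        = ∑ z ∈ B, ((k : ℤ) - ((A.filter (G.Adj z)).card : ℤ)) := by
      apply Finset.sum_congr rfl
      intro z hz
      have := split z hz
      have : (((A.filter (G.Adj z)).card : ℤ) + ((B.filter (G.Adj z)).card : ℤ)) = (k : ℤ) := by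
        exact_mod_cast congrArg (Nat.cast : ℕ → ℤ) this
      linarith
    rw [hsplit, Finset.sum_sub_distrib, Finset.sum_const, swap, sumA] at hsum
    rw [Finset.sum_const] at hsum
    simp only [nsmul_eq_mul] at hsum
    linarith [hsum]
  have hv' : (v : ℤ) = (B.card : ℤ) + k + 1 := by linarith
  rw [hv']
  nlinarith [key]
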